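/- For every integer d' ≥ 5 there exists a (5(d'−1)+3)-number USV1B5 in M_{5×d'}, i.e., a family of 5(d'−1)+3 matrices {A_i} in the space of 5×d' complex matrices, each satisfying A_i·A_iᴴ = I_5, with Tr(A_iᴴ A_j) = 5·δ_{ij} for all i, j, such that every B ∈ M_{5×d'} with Tr(A_iᴴ B) = 0 for all i does not satisfy B·Bᴴ = I_5. Equivalently, there is a (5(d'−1)+3)-number unextendible maximally entangled basis (UMEB) in ℂ^5 ⊗ ℂ^{d'}. -/

import Mathlib

open Matrix Complex

noncomputable def zz : ℂ := Complex.exp (Real.pi * Complex.I / 12)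
noncomputable def om : ℂ := Complex.exp (2 * Real.pi * Complex.I / 5)

lemma zz24 : zz ^ 24 = 1 := by
  rw [zz, ← Complex.exp_nat_mul]
  push_cast
  rw [show (24:ℂ) * (↑Real.pi * Complex.I / 12) = 2 * ↑Real.pi * Complex.I by ring]
  exact Complex.exp_two_pi_mul_I

lemma om5 : om ^ 5 = 1 := by
  rw [om, ← Complex.exp_nat_mul]
  push_cast
  rw [show (5:ℂ) * (2 * ↑Real.pi * Complex.I / 5) = 2 * ↑Real.pi * Complex.I by ring]
  exact Complex.exp_two_pi_mul_I

lemma zzne : zz ≠ 0 := Complex.exp_ne_zero _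
lemma omne : om ≠ 0 := Complex.exp_ne_zero _

lemma conj_zz_mul : (starRingEnd ℂ) zz * zz = 1 := by
  rw [zz, ← Complex.exp_conj, ← Complex.exp_add]
  have : (starRingEnd ℂ) (↑Real.pi * Complex.I / 12) = -(↑Real.pi * Complex.I / 12) := by
    simp [map_div₀, _root_.map_mul, Complex.conj_I, Complex.conj_ofReal, map_ofNat]
    ring
  rw [this, neg_add_cancel, Complex.exp_zero]

lemma conj_om_mul : (starRingEnd ℂ) om * om = 1 := by
  rw [om, ← Complex.exp_conj, ← Complex.exp_add]
  have : (starRingEnd ℂ) (2 * ↑Real.pi * Complex.I / 5) = -(2 * ↑Real.pi * Complex.I / 5) := by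
    simp [map_div₀, _root_.map_mul, Complex.conj_I, Complex.conj_ofReal, map_ofNat]
    ring
  rw [this, neg_add_cancel, Complex.exp_zero]

lemma conj_zz_pow (k : ℕ) (hk : k ≤ 24) : (starRingEnd ℂ) (zz ^ k) = zz ^ (24 - k) := by
  have h1 : (starRingEnd ℂ) (zz ^ k) * zz ^ k = 1 := by
    rw [map_pow, ← mul_pow, conj_zz_mul, one_pow]
  have h2 : zz ^ (24 - k) * zz ^ k = 1 := by
    rw [← pow_add, show 24 - k + k = 24 by omega, zz24]
  exact mul_right_cancel₀ (pow_ne_zero _ zzne) (h1.trans h2.symm)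

lemma conj_om_pow (k : ℕ) (hk : k ≤ 5) : (starRingEnd ℂ) (om ^ k) = om ^ (5 - k) := by
  have h1 : (starRingEnd ℂ) (om ^ k) * om ^ k = 1 := by
    rw [map_pow, ← mul_pow, conj_om_mul, one_pow]
  have h2 : om ^ (5 - k) * om ^ k = 1 := by
    rw [← pow_add, show 5 - k + k = 5 by omega, om5]
  exact mul_right_cancel₀ (pow_ne_zero _ omne) (h1.trans h2.symm)

lemma conj_om' : (starRingEnd ℂ) om = om ^ 4 := by
  have := conj_om_pow 1 (by norm_num); simpa using this

lemma h24 : zz ^ 8 - zz ^ 4 + 1 = 0 := by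
  have e4 : zz ^ 4 = 1/2 + (↑(Real.sqrt 3) / 2) * Complex.I := by
    rw [zz, ← Complex.exp_nat_mul]
    push_cast
    rw [show (4:ℂ) * (↑Real.pi * Complex.I / 12) = (↑(Real.pi/3)) * Complex.I by push_cast; ring]
    rw [Complex.exp_mul_I, ← Complex.ofReal_cos, ← Complex.ofReal_sin,
      Real.cos_pi_div_three, Real.sin_pi_div_three]
    push_cast; ring
  have s3 : ((Real.sqrt 3 : ℝ) : ℂ) ^ 2 = 3 := by
    rw [← Complex.ofReal_pow, Real.sq_sqrt (by norm_num : (3:ℝ) ≥ 0)]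
    norm_num
  have hI : (Complex.I) ^ 2 = -1 := Complex.I_sq
  calc zz ^ 8 - zz ^ 4 + 1 = (zz ^ 4) ^ 2 - zz ^ 4 + 1 := by ring
    _ = 0 := by rw [e4]; linear_combination (Complex.I^2/4) * s3 + (3/4 : ℂ) * hI

lemma om_pow_eq_one {k : ℕ} (h : om ^ k = 1) : 5 ∣ k := by
  rw [om, ← Complex.exp_nat_mul, Complex.exp_eq_one_iff] at h
  obtain ⟨n, hn⟩ := h
  have hne : (2 * ↑Real.pi * Complex.I : ℂ) ≠ 0 := by
    simp [Real.pi_ne_zero, Complex.I_ne_zero]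
  have h5 : (k : ℂ) * (2 * ↑Real.pi * Complex.I) = (5 * n) * (2 * ↑Real.pi * Complex.I) := by
    rw [show ((5:ℂ) * n) * (2 * ↑Real.pi * Complex.I) = (n:ℂ) * (2 * ↑Real.pi * Complex.I) * 5 by ring]
    rw [← hn]; ring
  have h6 : (k : ℂ) = (5 * n : ℤ) := by
    have := mul_right_cancel₀ hne h5
    push_cast
    exact this
  have h7 : (k : ℤ) = 5 * n := by exact_mod_cast h6
  have : (5:ℤ) ∣ (k:ℤ) := ⟨n, h7⟩
  exact_mod_cast this

lemma geom5 {x : ℂ} (h5 : x ^ 5 = 1) (h1 : x ≠ 1) :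
    ∑ j : Fin 5, x ^ (j : ℕ) = 0 := by
  have h : (x - 1) * (∑ j : Fin 5, x ^ (j : ℕ)) = 0 := by
    rw [Fin.sum_univ_eq_sum_range (fun j => x ^ j) 5]
    simp only [Finset.sum_range_succ, Finset.sum_range_zero]
    linear_combination h5
  rcases mul_eq_zero.1 h with h' | h'
  · exact absurd (sub_eq_zero.1 h') h1
  · exact h'

lemma core5 (k : ℕ) :
    ∑ j : Fin 5, (om ^ k) ^ (j : ℕ) = if 5 ∣ k then 5 else 0 := by
  by_cases h : 5 ∣ k
  · obtain ⟨c, rfl⟩ := h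
    simp [pow_mul, om5]
  · rw [if_neg h]
    refine geom5 ?_ ?_
    · rw [← pow_mul, mul_comm, pow_mul, om5, one_pow]
    · intro hx; exact h (om_pow_eq_one hx)

lemma fourier1 (p q : ℕ) (hp : p < 5) (hq : q < 5) :
    (∑ j : Fin 5, (starRingEnd ℂ) (om ^ (p * (j : ℕ))) * om ^ (q * (j : ℕ)))
      = if p = q then 5 else 0 := by
  have term : ∀ j : ℕ, (starRingEnd ℂ) (om ^ (p * j)) * om ^ (q * j)
      = (om ^ (4 * p + q)) ^ j := by
    intro j
    rw [map_pow, conj_om', ← pow_mul, ← pow_add, ← pow_mul]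
    congr 1
    ring
  rw [show (∑ j : Fin 5, (starRingEnd ℂ) (om ^ (p * (j:ℕ))) * om ^ (q * (j:ℕ)))
      = ∑ j : Fin 5, (om ^ (4 * p + q)) ^ (j:ℕ) from Finset.sum_congr rfl fun j _ => term j,
    core5]
  by_cases hpq : p = q
  · rw [if_pos (by omega), if_pos hpq]
  · rw [if_neg (by omega), if_neg hpq]

lemma fourier2 (p q : ℕ) (hp : p < 5) (hq : q < 5) :
    (∑ m : Fin 5, om ^ ((m : ℕ) * p) * (starRingEnd ℂ) (om ^ ((m : ℕ) * q)))
      = if p = q then 5 else 0 := by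
  have term : ∀ m : ℕ, om ^ (m * p) * (starRingEnd ℂ) (om ^ (m * q))
      = (om ^ (p + 4 * q)) ^ m := by
    intro m
    rw [map_pow, conj_om', ← pow_mul, ← pow_add, ← pow_mul]
    congr 1
    ring
  rw [show (∑ m : Fin 5, om ^ ((m:ℕ) * p) * (starRingEnd ℂ) (om ^ ((m:ℕ) * q)))
      = ∑ m : Fin 5, (om ^ (p + 4 * q)) ^ (m:ℕ) from Finset.sum_congr rfl fun m _ => term m,
    core5]
  by_cases hpq : p = q
  · rw [if_pos (by omega), if_pos hpq]
  · rw [if_neg (by omega), if_neg hpq]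

noncomputable def mkA (d' b : ℕ) (v : Fin 5 → ℂ) : Matrix (Fin 5) (Fin d') ℂ :=
  Matrix.of fun j k => if (k : ℕ) = ((j : ℕ) + b) % d' then v j else 0

lemma col_lt {d' : ℕ} (hd' : 5 ≤ d') (j b : ℕ) : (j + b) % d' < d' :=
  Nat.mod_lt _ (by omega)

lemma col_inj {d' : ℕ} (hd' : 5 ≤ d') (b : ℕ) {j k : Fin 5}
    (h : ((j:ℕ) + b) % d' = ((k:ℕ) + b) % d') : j = k := by
  have h2 : (j:ℕ) % d' = (k:ℕ) % d' := Nat.ModEq.add_right_cancel' b h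
  have hj : (j:ℕ) % d' = (j:ℕ) := Nat.mod_eq_of_lt (by omega)
  have hk : (k:ℕ) % d' = (k:ℕ) := Nat.mod_eq_of_lt (by omega)
  exact Fin.ext (by omega)

lemma mkA_mul_conjT {d' : ℕ} (hd' : 5 ≤ d') (b : ℕ) (v : Fin 5 → ℂ)
    (hv : ∀ j, v j * (starRingEnd ℂ) (v j) = 1) :
    mkA d' b v * (mkA d' b v)ᴴ = 1 := by
  ext j k
  rw [Matrix.mul_apply, Matrix.one_apply]
  simp only [Matrix.conjTranspose_apply, mkA, Matrix.of_apply]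
  rw [Finset.sum_eq_single (⟨((j:ℕ) + b) % d', col_lt hd' _ _⟩ : Fin d')]
  · by_cases hjk : j = k
    · subst hjk
      simp only [if_pos rfl]
      simpa using hv j
    · have hcond : ¬ (((⟨((j:ℕ)+b)%d', col_lt hd' _ _⟩ : Fin d') : ℕ) = ((k:ℕ)+b)%d') :=
        fun hc => hjk (col_inj hd' b (by simpa using hc))
      rw [if_pos rfl, if_neg hcond, if_neg hjk]
      simp
  · intro c _ hc
    have : ¬((c:ℕ) = ((j:ℕ)+b)%d') := fun hcontra => hc (Fin.ext (by simpa using hcontra))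
    rw [if_neg this]
    simp
  · intro h
    exact absurd (Finset.mem_univ _) h

lemma trace_mkA_mkA {d' : ℕ} (hd' : 5 ≤ d') {b c : ℕ} (hb : b < d') (hc : c < d')
    (v w : Fin 5 → ℂ) :
    ((mkA d' b v)ᴴ * mkA d' c w).trace
      = if b = c then (∑ j : Fin 5, (starRingEnd ℂ) (v j) * w j) else 0 := by
  have expand : ((mkA d' b v)ᴴ * mkA d' c w).trace
      = ∑ j : Fin 5, ∑ k : Fin d',
          (starRingEnd ℂ) (mkA d' b v j k) * mkA d' c w j k := by
    rw [Matrix.trace]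
    simp only [Matrix.diag_apply, Matrix.mul_apply, Matrix.conjTranspose_apply]
    rw [Finset.sum_comm]
    rfl
  rw [expand]
  by_cases hbc : b = c
  · subst hbc
    rw [if_pos rfl]
    refine Finset.sum_congr rfl fun j _ => ?_
    simp only [mkA, Matrix.of_apply]
    rw [Finset.sum_eq_single (⟨((j:ℕ) + b) % d', col_lt hd' _ _⟩ : Fin d')]
    · simp
    · intro k _ hk
      have : ¬((k:ℕ) = ((j:ℕ)+b)%d') := fun hcontra => hk (Fin.ext (by simpa using hcontra))
      rw [if_neg this]
      simp
    · intro h; exact absurd (Finset.mem_univ _) h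
  · rw [if_neg hbc]
    refine Finset.sum_eq_zero fun j _ => Finset.sum_eq_zero fun k _ => ?_
    simp only [mkA, Matrix.of_apply]
    by_cases h1 : (k:ℕ) = ((j:ℕ) + b) % d'
    · by_cases h2 : (k:ℕ) = ((j:ℕ) + c) % d'
      · exfalso
        have : ((j:ℕ) + b) % d' = ((j:ℕ) + c) % d' := by omega
        have h3 : b % d' = c % d' := Nat.ModEq.add_left_cancel' (j:ℕ) this
        rw [Nat.mod_eq_of_lt hb, Nat.mod_eq_of_lt hc] at h3
        exact hbc h3
      · rw [if_neg h2, mul_zero]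
    · rw [if_neg h1]
      simp
  
lemma trace_mkA_B {d' : ℕ} (hd' : 5 ≤ d') (b : ℕ) (v : Fin 5 → ℂ)
    (B : Matrix (Fin 5) (Fin d') ℂ) :
    ((mkA d' b v)ᴴ * B).trace
      = ∑ j : Fin 5, (starRingEnd ℂ) (v j) * B j ⟨((j:ℕ) + b) % d', col_lt hd' _ _⟩ := by
  have expand : ((mkA d' b v)ᴴ * B).trace
      = ∑ j : Fin 5, ∑ k : Fin d',
          (starRingEnd ℂ) (mkA d' b v j k) * B j k := by
    rw [Matrix.trace]
    simp only [Matrix.diag_apply, Matrix.mul_apply, Matrix.conjTranspose_apply]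
    rw [Finset.sum_comm]
    rfl
  rw [expand]
  refine Finset.sum_congr rfl fun j _ => ?_
  simp only [mkA, Matrix.of_apply]
  rw [Finset.sum_eq_single (⟨((j:ℕ) + b) % d', col_lt hd' _ _⟩ : Fin d')]
  · simp
  · intro k _ hk
    have : ¬((k:ℕ) = ((j:ℕ)+b)%d') := fun hcontra => hk (Fin.ext (by simpa using hcontra))
    rw [if_neg this]
    simp
  · intro h; exact absurd (Finset.mem_univ _) h
lemma czz1 : (starRingEnd ℂ) (zz ^ 1) = zz ^ 23 := by
  simpa using conj_zz_pow 1 (by norm_num)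
lemma czz3 : (starRingEnd ℂ) (zz ^ 3) = zz ^ 21 := by
  simpa using conj_zz_pow 3 (by norm_num)
lemma czz4 : (starRingEnd ℂ) (zz ^ 4) = zz ^ 20 := by
  simpa using conj_zz_pow 4 (by norm_num)
lemma czz5 : (starRingEnd ℂ) (zz ^ 5) = zz ^ 19 := by
  simpa using conj_zz_pow 5 (by norm_num)
lemma czz7 : (starRingEnd ℂ) (zz ^ 7) = zz ^ 17 := by
  simpa using conj_zz_pow 7 (by norm_num)
lemma czz8 : (starRingEnd ℂ) (zz ^ 8) = zz ^ 16 := by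
  simpa using conj_zz_pow 8 (by norm_num)
lemma czz9 : (starRingEnd ℂ) (zz ^ 9) = zz ^ 15 := by
  simpa using conj_zz_pow 9 (by norm_num)
lemma czz11 : (starRingEnd ℂ) (zz ^ 11) = zz ^ 13 := by
  simpa using conj_zz_pow 11 (by norm_num)
lemma czz12 : (starRingEnd ℂ) (zz ^ 12) = zz ^ 12 := by
  simpa using conj_zz_pow 12 (by norm_num)
lemma czz13 : (starRingEnd ℂ) (zz ^ 13) = zz ^ 11 := by
  simpa using conj_zz_pow 13 (by norm_num)
lemma czz15 : (starRingEnd ℂ) (zz ^ 15) = zz ^ 9 := by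
  simpa using conj_zz_pow 15 (by norm_num)
lemma czz16 : (starRingEnd ℂ) (zz ^ 16) = zz ^ 8 := by
  simpa using conj_zz_pow 16 (by norm_num)
lemma czz17 : (starRingEnd ℂ) (zz ^ 17) = zz ^ 7 := by
  simpa using conj_zz_pow 17 (by norm_num)
lemma czz19 : (starRingEnd ℂ) (zz ^ 19) = zz ^ 5 := by
  simpa using conj_zz_pow 19 (by norm_num)
lemma czz20 : (starRingEnd ℂ) (zz ^ 20) = zz ^ 4 := by
  simpa using conj_zz_pow 20 (by norm_num)
lemma czz21 : (starRingEnd ℂ) (zz ^ 21) = zz ^ 3 := by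
  simpa using conj_zz_pow 21 (by norm_num)
lemma czz23 : (starRingEnd ℂ) (zz ^ 23) = zz ^ 1 := by
  simpa using conj_zz_pow 23 (by norm_num)

noncomputable def uvec : ℕ → Fin 5 → ℂ := fun r =>
  if r = 0 then ![zz^12, zz^12, zz^3, zz^1, zz^17]
  else if r = 1 then ![zz^20, zz^12, zz^1, zz^11, zz^9]
  else ![zz^4, zz^12, zz^17, zz^9, zz^19]

lemma uv00 : uvec 0 0 = zz ^ 12 := by norm_num [uvec]
lemma uv01 : uvec 0 1 = zz ^ 12 := by norm_num [uvec]
lemma uv02 : uvec 0 2 = zz ^ 3 := by norm_num [uvec]; rfl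
lemma uv03 : uvec 0 3 = zz ^ 1 := by norm_num [uvec]; rfl
lemma uv04 : uvec 0 4 = zz ^ 17 := by norm_num [uvec]; rfl
lemma uv10 : uvec 1 0 = zz ^ 20 := by norm_num [uvec]
lemma uv11 : uvec 1 1 = zz ^ 12 := by norm_num [uvec]
lemma uv12 : uvec 1 2 = zz ^ 1 := by norm_num [uvec]; rfl
lemma uv13 : uvec 1 3 = zz ^ 11 := by norm_num [uvec]; rfl
lemma uv14 : uvec 1 4 = zz ^ 9 := by norm_num [uvec]; rfl
lemma uv20 : uvec 2 0 = zz ^ 4 := by norm_num [uvec]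
lemma uv21 : uvec 2 1 = zz ^ 12 := by norm_num [uvec]
lemma uv22 : uvec 2 2 = zz ^ 17 := by norm_num [uvec]; rfl
lemma uv23 : uvec 2 3 = zz ^ 9 := by norm_num [uvec]; rfl
lemma uv24 : uvec 2 4 = zz ^ 19 := by norm_num [uvec]; rfl

lemma utrace (r s : ℕ) (hr : r < 3) (hs : s < 3) :
    (∑ j : Fin 5, (starRingEnd ℂ) (uvec r j) * uvec s j) = if r = s then 5 else 0 := by
  interval_cases r <;> interval_cases s
  · rw [Fin.sum_univ_five]
    simp only [czz1, czz12, czz17, czz3, uv00, uv01, uv02, uv03, uv04]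
    norm_num
    linear_combination ((5) * zz^16 + (5) * zz^12 + (-5) * zz^4 + (-5:ℂ)) * h24
  · rw [Fin.sum_univ_five]
    simp only [czz1, czz12, czz17, czz3, uv00, uv01, uv02, uv03, uv04, uv10, uv11, uv12, uv13, uv14]
    norm_num
    linear_combination ((1) * zz^26 + (1) * zz^24 + (1) * zz^22 + (1) * zz^20 + (1) * zz^16) * h24
  · rw [Fin.sum_univ_five]
    simp only [czz1, czz12, czz17, czz3, uv00, uv01, uv02, uv03, uv04, uv20, uv21, uv22, uv23, uv24]
    norm_num
    linear_combination ((1) * zz^30 + (1) * zz^26 + (1) * zz^24 + (1) * zz^20 + (1) * zz^16) * h24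
  · rw [Fin.sum_univ_five]
    simp only [czz1, czz11, czz12, czz20, czz9, uv00, uv01, uv02, uv03, uv04, uv10, uv11, uv12, uv13, uv14]
    norm_num
    linear_combination ((1) * zz^24 + (1) * zz^20 + (1) * zz^18 + (1) * zz^16 + (1) * zz^14) * h24
  · rw [Fin.sum_univ_five]
    simp only [czz1, czz11, czz12, czz20, czz9, uv10, uv11, uv12, uv13, uv14]
    norm_num
    linear_combination ((5) * zz^16 + (5) * zz^12 + (-5) * zz^4 + (-5:ℂ)) * h24
  · rw [Fin.sum_univ_five]
    simp only [czz1, czz11, czz12, czz20, czz9, uv10, uv11, uv12, uv13, uv14, uv20, uv21, uv22, uv23, uv24]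
    norm_num
    linear_combination ((1) * zz^32 + (1) * zz^28 + (1) * zz^26 + (1) * zz^22 + (-1) * zz^20 + (1) * zz^12 + (1) * zz^8) * h24
  · rw [Fin.sum_univ_five]
    simp only [czz12, czz17, czz19, czz4, czz9, uv00, uv01, uv02, uv03, uv04, uv20, uv21, uv22, uv23, uv24]
    norm_num
    linear_combination ((1) * zz^24 + (1) * zz^20 + (1) * zz^16 + (1) * zz^14 + (1) * zz^10) * h24
  · rw [Fin.sum_univ_five]
    simp only [czz12, czz17, czz19, czz4, czz9, uv10, uv11, uv12, uv13, uv14, uv20, uv21, uv22, uv23, uv24]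
    norm_num
    linear_combination ((1) * zz^32 + (1) * zz^28 + (-1) * zz^20 + (1) * zz^18 + (1) * zz^14 + (1) * zz^12 + (1) * zz^8) * h24
  · rw [Fin.sum_univ_five]
    simp only [czz12, czz17, czz19, czz4, czz9, uv20, uv21, uv22, uv23, uv24]
    norm_num
    linear_combination ((5) * zz^16 + (5) * zz^12 + (-5) * zz^4 + (-5:ℂ)) * h24
lemma key (t0 t1 t2 t3 t4 s0 s1 s2 s3 s4 : ℂ)
    (H1 : zz^12*t0 + zz^12*t1 + zz^21*t2 + zz^23*t3 + zz^7*t4 = 0)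
    (H2 : zz^4*t0 + zz^12*t1 + zz^23*t2 + zz^13*t3 + zz^15*t4 = 0)
    (H3 : zz^20*t0 + zz^12*t1 + zz^7*t2 + zz^15*t3 + zz^5*t4 = 0)
    (Hc1 : zz^12*s0 + zz^12*s1 + zz^3*s2 + zz^1*s3 + zz^17*s4 = 0)
    (Hc2 : zz^20*s0 + zz^12*s1 + zz^1*s2 + zz^11*s3 + zz^9*s4 = 0)
    (Hc3 : zz^4*s0 + zz^12*s1 + zz^17*s2 + zz^9*s3 + zz^19*s4 = 0)
    (n0 : t0 * s0 = 1) (n1 : t1 * s1 = 1) (n2 : t2 * s2 = 1)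
    (n3 : t3 * s3 = 1) (n4 : t4 * s4 = 1) : False := by
  have h2 : 10 * t2 = 5 * t0 * (zz^3 + zz^21) + 5 * t1 * (zz^3 + zz^21) := by
    linear_combination ((-2) * zz^33 + (-2) * zz^15 + (2) * zz^3) * H1 + ((-1) * zz^41 + (-1) * zz^33 + (-1) * zz^23 + (-1) * zz^15 + (2) * zz) * H2 + ((-1) * zz^33 + (-1) * zz^25 + (2) * zz^17 + (-1) * zz^15 + (-1) * zz^7) * H3 + ((((1) * zz^45 + (1) * zz^41 + (4) * zz^37 + (3) * zz^33 + (-2) * zz^29 + (1) * zz^27 + (-5) * zz^25 + (1) * zz^23 + (-3) * zz^21 + (4) * zz^19 + (2) * zz^17 + (3) * zz^15 + (-2) * zz^9 + (-5) * zz^7 + (-2) * zz^5 + (-5) * zz^3)) * t0 + (((1) * zz^45 + (1) * zz^41 + (4) * zz^37 + (3) * zz^33 + (1) * zz^27 + (-3) * zz^25 + (1) * zz^23 + (-5) * zz^21 + (4) * zz^19 + (-2) * zz^17 + (3) * zz^15 + (-2) * zz^13 + (-5) * zz^7 + (-5) * zz^3)) * t1 + (((1) * zz^56 + (1) * zz^52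 + (1) * zz^48 + (2) * zz^46 + (2) * zz^42 + (-1) * zz^40 + (1) * zz^38 + (-1) * zz^36 + (-1) * zz^34 + (1) * zz^32 + (-1) * zz^30 + (4) * zz^28 + (4) * zz^24 + (1) * zz^22 + (1) * zz^18 + (-10) * zz^16 + (1) * zz^14 + (-10) * zz^12 + (10) * zz^4 + (10:ℂ))) * t2 + (((2) * zz^48 + (1) * zz^46 + (2) * zz^44 + (1) * zz^42 + (1) * zz^40 + (1) * zz^38 + (-1) * zz^36 + (-1) * zz^32 + (1) * zz^30 + (1) * zz^28 + (1) * zz^26 + (1) * zz^22 + (-2) * zz^18 + (-2) * zz^14)) * t3 + (((1) * zz^48 + (1) * zz^44 + (1) * zz^40 + (1) * zz^32 + (2) * zz^30 + (1) * zz^28 + (2) * zz^26 + (2) * zz^22 + (-1) * zz^20 + (-1) * zz^16 + (-2) * zz^14 + (1) * zz^12 + (-2) * zz^10)) * t4) * h24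
  have h3 : 10 * t3 = 5 * t0 * (zz^3 + zz^21) + 5 * t1 * (zz^3 + zz^21) * zz^8 := by
    linear_combination ((-1) * zz^41 + (-1) * zz^33 + (-1) * zz^23 + (-1) * zz^15 + (2) * zz) * H1 + ((-2) * zz^41 + (-2) * zz^23 + (2) * zz^11) * H2 + ((-1) * zz^41 + (-1) * zz^25 + (-1) * zz^23 + (2) * zz^9 + (-1) * zz^7) * H3 + ((((1) * zz^53 + (1) * zz^49 + (1) * zz^45 + (3) * zz^37 + (1) * zz^35 + (3) * zz^33 + (1) * zz^31 + (1) * zz^27 + (-3) * zz^25 + (-5) * zz^21 + (3) * zz^19 + (-2) * zz^17 + (3) * zz^15 + (-2) * zz^13 + (-5) * zz^7 + (-5) * zz^3)) * t0 + (((4) * zz^45 + (4) * zz^41 + (1) * zz^37 + (-3) * zz^33 + (-3) * zz^29 + (4) * zz^27 + (4) * zz^23 + (-2) * zz^21 + (1) * zz^19 + (-2) * zz^17 + (-5) * zz^15 + (-2) * zz^13 + (-5) * zz^11)) * t1 + (((2) * zz^56 + (1) * zz^54 + (2) * zz^52 + (1) * zz^50 + (1) * zz^46 + (-2) * zz^44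 + (-1) * zz^40 + (1) * zz^38 + (2) * zz^36 + (1) * zz^34 + (3) * zz^32 + (2) * zz^28 + (-3) * zz^26 + (-2) * zz^22 + (-2) * zz^20 + (1) * zz^18 + (-2) * zz^16 + (1) * zz^14)) * t2 + (((1) * zz^56 + (1) * zz^52 + (2) * zz^48 + (2) * zz^46 + (1) * zz^44 + (2) * zz^42 + (-1) * zz^40 + (1) * zz^38 + (-2) * zz^36 + (-1) * zz^34 + (4) * zz^28 + (1) * zz^26 + (4) * zz^24 + (1) * zz^22 + (-10) * zz^16 + (-10) * zz^12 + (10) * zz^4 + (10:ℂ))) * t3 + (((2) * zz^48 + (2) * zz^44 + (1) * zz^40 + (1) * zz^38 + (-1) * zz^36 + (1) * zz^34 + (-1) * zz^32 + (2) * zz^30 + (1) * zz^26 + (1) * zz^24 + (1) * zz^22 + (2) * zz^20 + (-2) * zz^18 + (1) * zz^16 + (-2) * zz^14 + (-1) * zz^12 + (-2) * zz^8)) * t4) * h24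
  have h4 : 10 * t4 = 5 * t0 * (zz^3 + zz^21) + 5 * t1 * (zz^3 + zz^21) * zz^16 := by
    linear_combination ((-1) * zz^49 + (-1) * zz^33 + (-1) * zz^31 + (2) * zz^17 + (-1) * zz^15) * H1 + ((-1) * zz^49 + (-1) * zz^41 + (-1) * zz^31 + (-1) * zz^23 + (2) * zz^9) * H2 + ((-1) * zz^49 + (-1) * zz^31 + (-1) * zz^25 + (2) * zz^19 + (-1) * zz^7) * H3 + ((((1) * zz^61 + (1) * zz^57 + (1) * zz^53 + (1) * zz^43 + (1) * zz^39 + (3) * zz^37 + (1) * zz^35 + (3) * zz^33 + (-2) * zz^31 + (-2) * zz^27 + (-3) * zz^25 + (-5) * zz^21 + (5) * zz^19 + (-2) * zz^17 + (5) * zz^15 + (-2) * zz^13 + (-5) * zz^7 + (-5) * zz^3)) * t0 + (((3) * zz^53 + (3) * zz^49 + (1) * zz^45 + (-2) * zz^41 + (-2) * zz^37 + (3) * zz^35 + (3) * zz^31 + (-2) * zz^29 + (1) * zz^27 + (-2) * zz^25 + (-4) * zz^23 + (-2) * zz^21 + (-4) * zz^19)) * t1 + (((1) * zz^64 + (1)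 * zz^62 + (1) * zz^60 + (1) * zz^58 + (1) * zz^56 + (-1) * zz^50 + (1) * zz^46 + (1) * zz^44 + (2) * zz^42 + (1) * zz^40 + (2) * zz^38 + (-1) * zz^32 + (-3) * zz^30 + (-3) * zz^26 + (1) * zz^18 + (1) * zz^14)) * t2 + (((1) * zz^64 + (1) * zz^60 + (1) * zz^56 + (1) * zz^54 + (1) * zz^50 + (2) * zz^46 + (1) * zz^42 + (1) * zz^36 + (-1) * zz^34 + (-1) * zz^26 + (-1) * zz^22)) * t3 + (((1) * zz^56 + (1) * zz^52 + (2) * zz^48 + (1) * zz^46 + (1) * zz^44 + (1) * zz^42 + (-1) * zz^40 + (1) * zz^38 + (-2) * zz^36 + (1) * zz^30 + (3) * zz^28 + (1) * zz^26 + (3) * zz^24 + (1) * zz^22 + (-9) * zz^16 + (-9) * zz^12 + (10) * zz^4 + (10:ℂ))) * t4) * h24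
  have h2c : 10 * s2 = 5 * s0 * (zz^3 + zz^21) + 5 * s1 * (zz^3 + zz^21) := by
    linear_combination ((-2) * zz^33 + (2) * zz^21 + (-2) * zz^15) * Hc1 + ((-1) * zz^33 + (-1) * zz^25 + (2) * zz^23 + (-1) * zz^15 + (-1) * zz^7) * Hc2 + ((-1) * zz^41 + (-1) * zz^33 + (-1) * zz^23 + (-1) * zz^15 + (2) * zz^7) * Hc3 + ((((1) * zz^45 + (1) * zz^41 + (4) * zz^37 + (-2) * zz^35 + (3) * zz^33 + (-2) * zz^31 + (1) * zz^27 + (-5) * zz^25 + (3) * zz^23 + (-5) * zz^21 + (6) * zz^19 + (3) * zz^15 + (-2) * zz^11 + (-5) * zz^7 + (-5) * zz^3)) * s0 + (((1) * zz^45 + (1) * zz^41 + (4) * zz^37 + (3) * zz^33 + (-1) * zz^27 + (-5) * zz^25 + (-1) * zz^23 + (-5) * zz^21 + (4) * zz^19 + (5) * zz^15 + (-5) * zz^7 + (-5) * zz^3)) * s1 + (((1) * zz^50 + (1) * zz^46 + (1) * zz^42 + (-1) * zz^34 + (1) * zz^32 + (-1) * zz^30 + (3) * zz^28 + (1) * zz^26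 + (3) * zz^24 + (2) * zz^22 + (2) * zz^18 + (-9) * zz^16 + (-9) * zz^12 + (1) * zz^8 + (10) * zz^4 + (10:ℂ))) * s2 + (((1) * zz^42 + (1) * zz^38 + (1) * zz^36 + (1) * zz^34 + (1) * zz^32 + (1) * zz^28 + (-1) * zz^26 + (1) * zz^24 + (-1) * zz^22 + (1) * zz^18)) * s3 + (((1) * zz^52 + (1) * zz^48 + (1) * zz^44 + (2) * zz^42 + (2) * zz^38 + (-1) * zz^36 + (2) * zz^34 + (-1) * zz^32 + (-2) * zz^30 + (-2) * zz^26 + (1) * zz^24 + (1) * zz^20 + (1) * zz^16)) * s4) * h24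
  have h3c : 10 * s3 = 5 * s0 * (zz^3 + zz^21) + 5 * s1 * (zz^3 + zz^21) * zz^16 := by
    linear_combination ((-1) * zz^49 + (-1) * zz^33 + (-1) * zz^31 + (2) * zz^23 + (-1) * zz^15) * Hc1 + ((-1) * zz^49 + (-1) * zz^31 + (-1) * zz^25 + (2) * zz^13 + (-1) * zz^7) * Hc2 + ((-1) * zz^49 + (-1) * zz^41 + (-1) * zz^31 + (-1) * zz^23 + (2) * zz^15) * Hc3 + ((((1) * zz^61 + (1) * zz^57 + (1) * zz^53 + (1) * zz^43 + (1) * zz^39 + (3) * zz^37 + (1) * zz^35 + (3) * zz^33 + (-2) * zz^27 + (-5) * zz^25 + (-2) * zz^23 + (-5) * zz^21 + (3) * zz^19 + (5) * zz^15 + (-5) * zz^7 + (-5) * zz^3)) * s0 + (((3) * zz^53 + (3) * zz^49 + (1) * zz^45 + (-2) * zz^41 + (-2) * zz^37 + (3) * zz^35 + (3) * zz^31 + (-2) * zz^29 + (-1) * zz^27 + (-2) * zz^25 + (-4) * zz^23 + (-4) * zz^19)) * s1 + (((1) * zz^58 + (1) * zz^54 + (1) * zz^50 + (1) * zz^44 +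 (2) * zz^40 + (1) * zz^36 + (1) * zz^26 + (-1) * zz^24 + (1) * zz^22 + (-1) * zz^20 + (-1) * zz^18 + (-2) * zz^14 + (1) * zz^12 + (1) * zz^8)) * s2 + (((1) * zz^52 + (1) * zz^50 + (1) * zz^48 + (1) * zz^46 + (2) * zz^42 + (-1) * zz^40 + (1) * zz^38 + (-1) * zz^36 + (1) * zz^32 + (-1) * zz^30 + (3) * zz^28 + (4) * zz^24 + (1) * zz^22 + (1) * zz^20 + (1) * zz^18 + (-9) * zz^16 + (-10) * zz^12 + (10) * zz^4 + (10:ℂ))) * s3 + (((1) * zz^60 + (1) * zz^58 + (1) * zz^56 + (1) * zz^54 + (1) * zz^52 + (1) * zz^50 + (-1) * zz^44 + (1) * zz^42 + (1) * zz^38 + (1) * zz^36 + (1) * zz^34 + (-1) * zz^28 + (-2) * zz^26 + (-2) * zz^22 + (1) * zz^20 + (1) * zz^16)) * s4) * h24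
  have h4c : 10 * s4 = 5 * s0 * (zz^3 + zz^21) + 5 * s1 * (zz^3 + zz^21) * zz^8 := by
    linear_combination ((-1) * zz^41 + (-1) * zz^33 + (-1) * zz^23 + (-1) * zz^15 + (2) * zz^7) * Hc1 + ((-1) * zz^41 + (-1) * zz^25 + (-1) * zz^23 + (2) * zz^15 + (-1) * zz^7) * Hc2 + ((-2) * zz^41 + (-2) * zz^23 + (2) * zz^5) * Hc3 + ((((1) * zz^53 + (1) * zz^49 + (1) * zz^45 + (3) * zz^37 + (1) * zz^35 + (3) * zz^33 + (1) * zz^31 + (-1) * zz^27 + (-3) * zz^25 + (-2) * zz^23 + (-3) * zz^21 + (3) * zz^19 + (5) * zz^15 + (-2) * zz^13 + (-2) * zz^9 + (-5) * zz^7 + (-5) * zz^3)) * s0 + (((4) * zz^45 + (4) * zz^41 + (1) * zz^37 + (-3) * zz^33 + (-3) * zz^29 + (4) * zz^27 + (4) * zz^23 + (-2) * zz^21 + (-1) * zz^19 + (-2) * zz^17 + (-5) * zz^15 + (-5) * zz^11)) * s1 + (((2) * zz^50 + (2) * zz^46 + (-2) * zz^38 + (1) * zz^36 + (-1) * zz^34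 + (3) * zz^32 + (1) * zz^30 + (3) * zz^28 + (2) * zz^26 + (1) * zz^22 + (-3) * zz^20 + (1) * zz^18 + (-2) * zz^16 + (-2) * zz^14 + (1) * zz^12 + (-2) * zz^10 + (1) * zz^8)) * s2 + (((1) * zz^44 + (2) * zz^42 + (1) * zz^40 + (2) * zz^38 + (1) * zz^34 + (-1) * zz^32 + (-1) * zz^30 + (3) * zz^24 + (1) * zz^22 + (3) * zz^20 + (-1) * zz^18 + (1) * zz^16 + (-2) * zz^14 + (-2) * zz^12 + (-2) * zz^8)) * s3 + (((2) * zz^52 + (1) * zz^50 + (2) * zz^48 + (1) * zz^46 + (2) * zz^42 + (-2) * zz^40 + (1) * zz^38 + (-2) * zz^36 + (1) * zz^34 + (1) * zz^32 + (3) * zz^28 + (4) * zz^24 + (1) * zz^20 + (-9) * zz^16 + (-10) * zz^12 + (10) * zz^4 + (10:ℂ))) * s4) * h24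
  have e0 : (5*t0*(zz^3 + zz^21)) * (5*s0*(zz^3 + zz^21)) = 50 := by
    linear_combination (25*(zz^3 + zz^21)^2) * n0 + (((25) * zz^34 + (25) * zz^30 + (-25) * zz^22 + (-25) * zz^18 + (50) * zz^16 + (50) * zz^12 + (25) * zz^10 + (25) * zz^6 + (-50) * zz^4 + (-50:ℂ))) * h24
  have e1 : (5*t1*(zz^3 + zz^21)) * (5*s1*(zz^3 + zz^21)) = 50 := by
    linear_combination (25*(zz^3 + zz^21)^2) * n1 + (((25) * zz^34 + (25) * zz^30 + (-25) * zz^22 + (-25) * zz^18 + (50) * zz^16 + (50) * zz^12 + (25) * zz^10 + (25) * zz^6 + (-50) * zz^4 + (-50:ℂ))) * h24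
  have e1' : (5*t1*(zz^3 + zz^21)*zz^8) * (5*s1*(zz^3 + zz^21)*zz^16) = 50 := by
    linear_combination (25*(zz^3 + zz^21)^2*zz^24) * n1 + (((25) * zz^58 + (25) * zz^54 + (-25) * zz^46 + (-25) * zz^42 + (50) * zz^40 + (50) * zz^36 + (25) * zz^34 + (25) * zz^30 + (-50) * zz^28 + (-50) * zz^24 + (50) * zz^16 + (50) * zz^12 + (-50) * zz^4 + (-50:ℂ))) * h24
  have e1'' : (5*t1*(zz^3 + zz^21)*zz^16) * (5*s1*(zz^3 + zz^21)*zz^8) = 50 := by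
    linear_combination (25*(zz^3 + zz^21)^2*zz^24) * n1 + (((25) * zz^58 + (25) * zz^54 + (-25) * zz^46 + (-25) * zz^42 + (50) * zz^40 + (50) * zz^36 + (25) * zz^34 + (25) * zz^30 + (-50) * zz^28 + (-50) * zz^24 + (50) * zz^16 + (50) * zz^12 + (-50) * zz^4 + (-50:ℂ))) * h24
  have e2 : (5*t0*(zz^3 + zz^21) + 5*t1*(zz^3 + zz^21)) * (5*s0*(zz^3 + zz^21) + 5*s1*(zz^3 + zz^21)) = 100 := by
    rw [← h2, ← h2c]; linear_combination 100 * n2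
  have e3 : (5*t0*(zz^3 + zz^21) + 5*t1*(zz^3 + zz^21)*zz^8) * (5*s0*(zz^3 + zz^21) + 5*s1*(zz^3 + zz^21)*zz^16) = 100 := by
    rw [← h3, ← h3c]; linear_combination 100 * n3
  have e4 : (5*t0*(zz^3 + zz^21) + 5*t1*(zz^3 + zz^21)*zz^16) * (5*s0*(zz^3 + zz^21) + 5*s1*(zz^3 + zz^21)*zz^8) = 100 := by
    rw [← h4, ← h4c]; linear_combination 100 * n4
  have f2 : (5*t0*(zz^3 + zz^21))*(5*s1*(zz^3 + zz^21)) + (5*s0*(zz^3 + zz^21))*(5*t1*(zz^3 + zz^21)) = 0 := by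
    linear_combination e2 - e0 - e1
  have f3 : (5*t0*(zz^3 + zz^21))*(5*s1*(zz^3 + zz^21))*zz^16 + (5*s0*(zz^3 + zz^21))*(5*t1*(zz^3 + zz^21))*zz^8 = 0 := by
    linear_combination e3 - e0 - e1'
  have g : ((5*s0*(zz^3 + zz^21))*(5*t1*(zz^3 + zz^21))) * (zz^8 - zz^16) = 0 := by
    linear_combination f3 - zz^16 * f2
  have hz8 : zz^8 - zz^16 ≠ 0 := by
    intro h
    have h16 : zz^16 = zz^8 := (sub_eq_zero.1 h).symm
    have h8 : zz^8 = 1 := by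
      have hcalc : zz^8 * zz^8 = zz^8 * 1 := by
        rw [mul_one, ← pow_add]; exact h16
      exact mul_left_cancel₀ (pow_ne_zero 8 zzne) hcalc
    have h4' : zz^4 = 2 := by linear_combination h8 - h24
    have : (1:ℂ) = 64 := by
      calc (1:ℂ) = zz^24 := zz24.symm
        _ = (zz^4)^6 := by ring
        _ = 2^6 := by rw [h4']
        _ = 64 := by norm_num
    norm_num at this
  rcases mul_eq_zero.1 g with h | h
  · rcases mul_eq_zero.1 h with h' | h'
    · rw [h'] at e0
      simp at e0
    · rw [h'] at e1
      simp at e1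
  · exact hz8 h
def skip1 (n : ℕ) : ℕ := if n = 0 then 0 else n + 1

lemma skip1_lt {n d' : ℕ} (hd' : 5 ≤ d') (h : n < d' - 1) : skip1 n < d' := by
  unfold skip1; split <;> omega

lemma skip1_ne_one (n : ℕ) : skip1 n ≠ 1 := by
  unfold skip1; split <;> omega

lemma skip1_inj {m n : ℕ} (h : skip1 m = skip1 n) : m = n := by
  unfold skip1 at h; split at h <;> split at h <;> omega

lemma om_mul_conj : om * (starRingEnd ℂ) om = 1 := by
  rw [mul_comm]; exact conj_om_mul

lemma zz_mul_conj : zz * (starRingEnd ℂ) zz = 1 := by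
  rw [mul_comm]; exact conj_zz_mul

lemma om_pow_unimodular (k : ℕ) : om ^ k * (starRingEnd ℂ) (om ^ k) = 1 := by
  rw [map_pow, ← mul_pow, om_mul_conj, one_pow]

lemma uvec_unimodular (r : ℕ) (j : Fin 5) :
    uvec r j * (starRingEnd ℂ) (uvec r j) = 1 := by
  have base : ∀ k : ℕ, zz ^ k * (starRingEnd ℂ) (zz ^ k) = 1 := fun k => by
    rw [map_pow, ← mul_pow, zz_mul_conj, one_pow]
  unfold uvec
  split_ifs <;> fin_cases j <;> exact base _

noncomputable def Afam (d' : ℕ) (i : ℕ) : Matrix (Fin 5) (Fin d') ℂ :=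
  if i < 5 * (d' - 1) then mkA d' (skip1 (i / 5)) (fun j => om ^ ((i % 5) * (j : ℕ)))
  else mkA d' 1 (uvec (i - 5 * (d' - 1)))

/-- Example 5.2: for every `d' ≥ 5` there is a `(5(d'-1)+3)`-number
USV1B5 in `M_{5×d'}`, i.e., a `(5(d'-1)+3)`-number UMEB in `ℂ^5 ⊗ ℂ^{d'}`. -/
theorem exists_UMEB_5xd' (d' : ℕ) (hd' : 5 ≤ d') :
    ∃ A : Fin (5 * (d' - 1) + 3) → Matrix (Fin 5) (Fin d') ℂ,
      (∀ i, A i * (A i)ᴴ = 1) ∧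
      (∀ i j, ((A i)ᴴ * A j).trace = if i = j then (5 : ℂ) else 0) ∧
      (∀ B : Matrix (Fin 5) (Fin d') ℂ,
        (∀ i, ((A i)ᴴ * B).trace = 0) → ¬ (B * Bᴴ = 1)) := by
  classical
  refine ⟨fun i => Afam d' (i : ℕ), ?_, ?_, ?_⟩
  · -- each member is a 5-singular-value-1 matrix
    intro i
    simp only [Afam]
    by_cases h : (i : ℕ) < 5 * (d' - 1)
    · rw [if_pos h]
      exact mkA_mul_conjT hd' _ _ (fun j => om_pow_unimodular _)
    · rw [if_neg h]
      exact mkA_mul_conjT hd' _ _ (fun j => uvec_unimodular _ j)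
  · -- orthogonality relations
    intro i k
    simp only [Afam]
    by_cases hi : (i : ℕ) < 5 * (d' - 1) <;> by_cases hk : (k : ℕ) < 5 * (d' - 1)
    · -- Pauli vs Pauli
      rw [if_pos hi, if_pos hk,
        trace_mkA_mkA hd' (skip1_lt hd' (by omega)) (skip1_lt hd' (by omega))]
      by_cases hb : skip1 ((i : ℕ) / 5) = skip1 ((k : ℕ) / 5)
      · have hdiv : (i : ℕ) / 5 = (k : ℕ) / 5 := skip1_inj hb
        rw [if_pos hb, fourier1 ((i : ℕ) % 5) ((k : ℕ) % 5) (by omega) (by omega)]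
        by_cases hm : (i : ℕ) % 5 = (k : ℕ) % 5
        · rw [if_pos hm, if_pos (show i = k from Fin.ext (by omega))]
        · rw [if_neg hm, if_neg (show ¬ i = k from fun hik => hm (by rw [hik]))]
      · rw [if_neg hb, if_neg (show ¬ i = k from fun hik => hb (by rw [hik]))]
    · -- Pauli vs special
      rw [if_pos hi, if_neg hk, trace_mkA_mkA hd' (skip1_lt hd' (by omega)) (by omega),
        if_neg (skip1_ne_one _), if_neg (show ¬ i = k from fun hik => by omega)]
    · -- special vs Pauli
      rw [if_neg hi, if_pos hk, trace_mkA_mkA hd' (by omega) (skip1_lt hd' (by omega)),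
        if_neg (fun h => skip1_ne_one _ h.symm),
        if_neg (show ¬ i = k from fun hik => by omega)]
    · -- special vs special
      rw [if_neg hi, if_neg hk, trace_mkA_mkA hd' (by omega) (by omega), if_pos rfl,
        utrace _ _ (by omega) (by omega)]
      by_cases h : (i : ℕ) - 5 * (d' - 1) = (k : ℕ) - 5 * (d' - 1)
      · rw [if_pos h, if_pos (show i = k from Fin.ext (by omega))]
      · rw [if_neg h, if_neg (show ¬ i = k from fun hik => h (by rw [hik]))]
  · -- unextendibility
    intro B hB hBB
    -- all entries outside the shift-1 diagonal vanish
    have hzero : ∀ (j : Fin 5) (kk : Fin d'),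
        (kk : ℕ) ≠ ((j : ℕ) + 1) % d' → B j kk = 0 := by
      intro j kk hk
      set n : ℕ := ((kk : ℕ) + d' - (j : ℕ)) % d' with hn
      have hnlt : n < d' := Nat.mod_lt _ (by omega)
      have hjn : ((j : ℕ) + n) % d' = (kk : ℕ) := by
        rw [hn, Nat.add_mod_mod,
          show (j : ℕ) + ((kk : ℕ) + d' - (j : ℕ)) = (kk : ℕ) + d' by omega,
          Nat.add_mod_right, Nat.mod_eq_of_lt kk.isLt]
      have hn1 : n ≠ 1 := fun h1 => hk (by rw [← hjn, h1])
      set n' : ℕ := if n = 0 then 0 else n - 1 with hn'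
      have hsk : skip1 n' = n := by rw [hn', skip1]; split_ifs <;> omega
      have hn'lt : n' < d' - 1 := by rw [hn']; split_ifs <;> omega
      have Hm : ∀ m : Fin 5, (∑ j' : Fin 5, (starRingEnd ℂ) (om ^ ((m : ℕ) * (j' : ℕ))) *
          B j' ⟨((j' : ℕ) + n) % d', col_lt hd' _ _⟩) = 0 := by
        intro m
        have h0 := hB ⟨5 * n' + (m : ℕ), by omega⟩
        simp only [Afam] at h0
        rw [if_pos (show 5 * n' + (m : ℕ) < 5 * (d' - 1) by omega),
          trace_mkA_B hd'] at h0
        rw [show (5 * n' + (m : ℕ)) / 5 = n' by omega,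
          show (5 * n' + (m : ℕ)) % 5 = (m : ℕ) by omega, hsk] at h0
        exact h0
      have hcj : B j ⟨((j : ℕ) + n) % d', col_lt hd' _ _⟩ = 0 := by
        have hsum : (∑ m : Fin 5, om ^ ((m : ℕ) * (j : ℕ)) *
            (∑ j' : Fin 5, (starRingEnd ℂ) (om ^ ((m : ℕ) * (j' : ℕ))) *
              B j' ⟨((j' : ℕ) + n) % d', col_lt hd' _ _⟩)) = 0 :=
          Finset.sum_eq_zero fun m _ => by rw [Hm m, mul_zero]
        simp only [Finset.mul_sum] at hsum
        rw [Finset.sum_comm] at hsum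
        have step : ∀ j' : Fin 5, (∑ m : Fin 5, om ^ ((m : ℕ) * (j : ℕ)) *
            ((starRingEnd ℂ) (om ^ ((m : ℕ) * (j' : ℕ))) *
              B j' ⟨((j' : ℕ) + n) % d', col_lt hd' _ _⟩))
            = (if (j : ℕ) = (j' : ℕ) then (5 : ℂ) else 0) *
              B j' ⟨((j' : ℕ) + n) % d', col_lt hd' _ _⟩ := by
          intro j'
          simp only [← mul_assoc]
          rw [← Finset.sum_mul, fourier2 (j : ℕ) (j' : ℕ) (by omega) (by omega)]
        rw [show (∑ j' : Fin 5, ∑ m : Fin 5, om ^ ((m : ℕ) * (j : ℕ)) *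
            ((starRingEnd ℂ) (om ^ ((m : ℕ) * (j' : ℕ))) *
              B j' ⟨((j' : ℕ) + n) % d', col_lt hd' _ _⟩))
            = ∑ j' : Fin 5, (if (j : ℕ) = (j' : ℕ) then (5 : ℂ) else 0) *
              B j' ⟨((j' : ℕ) + n) % d', col_lt hd' _ _⟩ from
          Finset.sum_congr rfl fun j' _ => step j'] at hsum
        rw [Finset.sum_eq_single j] at hsum
        · rw [if_pos rfl] at hsum
          have h5 : (5 : ℂ) ≠ 0 := by norm_num
          rcases mul_eq_zero.1 hsum with h | h
          · exact absurd h h5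
          · exact h
        · intro j' _ hj'
          rw [if_neg (fun hc => hj' (Fin.ext hc.symm)), zero_mul]
        · intro h; exact absurd (Finset.mem_univ _) h
      have hkk : kk = ⟨((j : ℕ) + n) % d', col_lt hd' _ _⟩ := Fin.ext hjn.symm
      rw [hkk]; exact hcj
    -- the five relevant entries
    set t : Fin 5 → ℂ := fun j => B j ⟨((j : ℕ) + 1) % d', col_lt hd' _ _⟩ with ht
    have hnorm : ∀ j : Fin 5, t j * (starRingEnd ℂ) (t j) = 1 := by
      intro j
      have h1 : (B * Bᴴ) j j = 1 := by rw [hBB]; simp [Matrix.one_apply]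
      rw [Matrix.mul_apply] at h1
      simp only [Matrix.conjTranspose_apply] at h1
      rw [Finset.sum_eq_single (⟨((j : ℕ) + 1) % d', col_lt hd' _ _⟩ : Fin d')] at h1
      · exact h1
      · intro kk _ hkk
        rw [hzero j kk (fun hc => hkk (Fin.ext hc)), zero_mul]
      · intro h; exact absurd (Finset.mem_univ _) h
    have Hraw : ∀ r : ℕ, r < 3 → (∑ j : Fin 5, (starRingEnd ℂ) (uvec r j) * t j) = 0 := by
      intro r hr
      have h0 := hB ⟨5 * (d' - 1) + r, by omega⟩
      simp only [Afam] at h0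
      rw [if_neg (by omega), trace_mkA_B hd',
        show 5 * (d' - 1) + r - 5 * (d' - 1) = r by omega] at h0
      exact h0
    have H1 : zz^12 * t 0 + zz^12 * t 1 + zz^21 * t 2 + zz^23 * t 3 + zz^7 * t 4 = 0 := by
      have h := Hraw 0 (by norm_num)
      rw [Fin.sum_univ_five] at h
      simp only [uv00, uv01, uv02, uv03, uv04, czz12, czz3, czz1, czz17] at h
      linear_combination h
    have H2 : zz^4 * t 0 + zz^12 * t 1 + zz^23 * t 2 + zz^13 * t 3 + zz^15 * t 4 = 0 := by
      have h := Hraw 1 (by norm_num)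
      rw [Fin.sum_univ_five] at h
      simp only [uv10, uv11, uv12, uv13, uv14, czz20, czz12, czz1, czz11, czz9] at h
      linear_combination h
    have H3 : zz^20 * t 0 + zz^12 * t 1 + zz^7 * t 2 + zz^15 * t 3 + zz^5 * t 4 = 0 := by
      have h := Hraw 2 (by norm_num)
      rw [Fin.sum_univ_five] at h
      simp only [uv20, uv21, uv22, uv23, uv24, czz4, czz12, czz17, czz9, czz19] at h
      linear_combination h
    have Hc1 : zz^12 * (starRingEnd ℂ) (t 0) + zz^12 * (starRingEnd ℂ) (t 1)
        + zz^3 * (starRingEnd ℂ) (t 2) + zz^1 * (starRingEnd ℂ) (t 3)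
        + zz^17 * (starRingEnd ℂ) (t 4) = 0 := by
      have h := congrArg (starRingEnd ℂ) H1
      simp only [map_add, _root_.map_mul, map_zero, czz12, czz21, czz23, czz7] at h
      linear_combination h
    have Hc2 : zz^20 * (starRingEnd ℂ) (t 0) + zz^12 * (starRingEnd ℂ) (t 1)
        + zz^1 * (starRingEnd ℂ) (t 2) + zz^11 * (starRingEnd ℂ) (t 3)
        + zz^9 * (starRingEnd ℂ) (t 4) = 0 := by
      have h := congrArg (starRingEnd ℂ) H2
      simp only [map_add, _root_.map_mul, map_zero, czz4, czz12, czz23, czz13, czz15] at h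
      linear_combination h
    have Hc3 : zz^4 * (starRingEnd ℂ) (t 0) + zz^12 * (starRingEnd ℂ) (t 1)
        + zz^17 * (starRingEnd ℂ) (t 2) + zz^9 * (starRingEnd ℂ) (t 3)
        + zz^19 * (starRingEnd ℂ) (t 4) = 0 := by
      have h := congrArg (starRingEnd ℂ) H3
      simp only [map_add, _root_.map_mul, map_zero, czz20, czz12, czz7, czz15, czz5] at h
      linear_combination h
    exact key (t 0) (t 1) (t 2) (t 3) (t 4)
      ((starRingEnd ℂ) (t 0)) ((starRingEnd ℂ) (t 1)) ((starRingEnd ℂ) (t 2))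
      ((starRingEnd ℂ) (t 3)) ((starRingEnd ℂ) (t 4))
      H1 H2 H3 Hc1 Hc2 Hc3 (hnorm 0) (hnorm 1) (hnorm 2) (hnorm 3) (hnorm 4)
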